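/- For any n ≥ m ≥ 2 and any residue r with 0 ≤ r ≤ m−1, the number of permutations π of {1,…,n} with maj(π) ≡ r (mod m) equals n!/m. -/

import Mathlib

open Finset

/-- The major index of a permutation of `Fin n`: the sum of the (1-based)
positions `i` such that `π i > π (i+1)`. -/
def maj (n : ℕ) (π : Equiv.Perm (Fin n)) : ℕ :=
  ∑ i ∈ Finset.range n, if h : i + 1 < n then
    (if π ⟨i + 1, h⟩ < π ⟨i, Nat.lt_of_succ_lt h⟩ then i + 1 else 0) else 0

def desL : List ℕ → ℕ
  | a :: b :: l => (if b < a then 1 else 0) + desL (b :: l)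
  | _ => 0

def majL : ℕ → List ℕ → ℕ
  | i, a :: b :: l => (if b < a then i + 1 else 0) + majL (i+1) (b :: l)
  | _, _ => 0

@[simp] lemma desL_nil : desL [] = 0 := rfl
@[simp] lemma desL_single (a : ℕ) : desL [a] = 0 := rfl
lemma desL_cons (a b : ℕ) (l : List ℕ) :
    desL (a :: b :: l) = (if b < a then 1 else 0) + desL (b :: l) := rfl
@[simp] lemma majL_nil (i : ℕ) : majL i [] = 0 := rfl
@[simp] lemma majL_single (i a : ℕ) : majL i [a] = 0 := rfl
lemma majL_cons (i a b : ℕ) (l : List ℕ) :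
    majL i (a :: b :: l) = (if b < a then i + 1 else 0) + majL (i+1) (b :: l) := rfl

lemma desL_le : ∀ (a : ℕ) (l : List ℕ), desL (a :: l) ≤ l.length
  | _, [] => le_refl 0
  | a, b :: l => by
    rw [desL_cons]
    have := desL_le b l
    simp only [List.length_cons]
    split <;> omega

lemma majL_shift : ∀ (l : List ℕ) (i : ℕ), majL (i+1) l = desL l + majL i l
  | [], _ => rfl
  | [a], _ => rfl
  | a :: b :: l, i => by
    rw [majL_cons, majL_cons, desL_cons, majL_shift (b :: l) (i+1)]
    split <;> omega

lemma majL_split : ∀ (u : List ℕ) (a : ℕ) (v : List ℕ) (i : ℕ),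
    majL i (u ++ a :: v) = majL i (u ++ [a]) + majL (i + u.length) (a :: v)
  | [], a, v, i => by simp
  | [x], a, v, i => by
    cases v with
    | nil => simp
    | cons b v' =>
      simp only [List.cons_append, List.nil_append, majL_cons, majL_single,
        List.length_cons, List.length_nil, Nat.zero_add]
      omega
  | x :: y :: u, a, v, i => by
    simp only [List.cons_append, majL_cons]
    rw [← List.cons_append, ← List.cons_append, majL_split (y :: u) a v (i+1)]
    rw [show i + 1 + (y :: u).length = i + (x :: y :: u).length by
      simp only [List.length_cons]; omega]
    omega

lemma majL_concat_two : ∀ (u : List ℕ) (a x i : ℕ),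
    majL i (u ++ [a, x]) = majL i (u ++ [a]) + (if x < a then i + u.length + 1 else 0)
  | [], a, x, i => by
    simp only [List.nil_append, majL_cons, majL_single, List.length_nil]
    split <;> omega
  | [c], a, x, i => by
    simp only [List.cons_append, List.nil_append, majL_cons, majL_single, majL_nil,
      List.length_cons, List.length_nil]
    split <;> split <;> omega
  | c :: d :: u, a, x, i => by
    simp only [List.cons_append, majL_cons]
    rw [← List.cons_append, ← List.cons_append, majL_concat_two (d :: u) a x (i+1)]
    rw [show i + 1 + (d :: u).length + 1 = i + (c :: d :: u).length + 1 by
      simp only [List.length_cons]; omega]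
    omega

def majG (s : List ℕ) (k : ℕ) : ℕ :=
  if k = s.length then 0
  else if 0 < k ∧ s.getD k 0 < s.getD (k-1) 0 then 1 + desL (s.drop k)
  else k + 1 + desL (s.drop k)

lemma getD_append_self (u v : List ℕ) (b : ℕ) : (u ++ b :: v).getD u.length 0 = b := by
  rw [List.getD_eq_getElem?_getD, List.getElem?_append_right (le_refl _)]
  simp

lemma majL_append_max (u : List ℕ) (M i : ℕ) (hu : ∀ x ∈ u, x < M) :
    majL i (u ++ [M]) = majL i u := by
  rcases u.eq_nil_or_concat with rfl | ⟨u', a, rfl⟩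
  · simp
  · rw [List.concat_eq_append, List.append_assoc, List.singleton_append, majL_concat_two u' a M i,
      if_neg (by exact fun h => absurd (hu a (by simp)) (by omega))]
    omega

theorem majL_insert (u v : List ℕ) (M : ℕ) (hu : ∀ x ∈ u, x < M)
    (hv : ∀ x ∈ v, x < M) :
    majL 0 (u ++ M :: v) = majL 0 (u ++ v) + majG (u ++ v) u.length := by
  cases v with
  | nil =>
    rw [majL_append_max u M 0 hu, List.append_nil, majG, if_pos rfl]
    omega
  | cons b v' =>
    rw [majL_split u M (b :: v') 0, majL_split u b v' 0, majL_append_max u M 0 hu,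
      Nat.zero_add, majL_cons, if_pos (hv b (by simp)), majL_shift (b :: v') u.length]
    rcases u.eq_nil_or_concat with rfl | ⟨u', a, rfl⟩
    · simp only [List.nil_append, List.length_nil, majL_single, majG, List.drop_zero,
        majL_nil]
      rw [if_neg (by simp only [List.length_cons]; omega),
        if_neg (by rintro ⟨h, -⟩; omega)]
      omega
    · simp only [List.concat_eq_append]
      have hins : majL 0 ((u' ++ [a]) ++ [b])
          = majL 0 (u' ++ [a]) + (if b < a then 0 + u'.length + 1 else 0) := by
        rw [List.append_assoc, List.singleton_append, majL_concat_two u' a b 0]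
      rw [hins, majG]
      rw [if_neg (show ¬(u' ++ [a]).length = ((u' ++ [a]) ++ b :: v').length by
        simp only [List.length_append, List.length_cons, List.length_nil]; omega)]
      have hgd1 : ((u' ++ [a]) ++ b :: v').getD (u' ++ [a]).length 0 = b :=
        getD_append_self _ _ _
      have hgd2 : ((u' ++ [a]) ++ b :: v').getD ((u' ++ [a]).length - 1) 0 = a := by
        rw [List.append_assoc, List.singleton_append,
          show (u' ++ [a]).length - 1 = u'.length by simp]
        simpa using getD_append_self u' (b :: v') a
      have hdrop : ((u' ++ [a]) ++ b :: v').drop (u' ++ [a]).length = b :: v' :=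
        List.drop_left
      rw [hgd1, hgd2, hdrop]
      have hlen : (u' ++ [a]).length = u'.length + 1 := by simp
      have hlen2 : ((u' ++ [a]) ++ b :: v').length = u'.length + v'.length + 2 := by simp; omega
      split_ifs <;> omega

lemma desL_drop_succ (s : List ℕ) (k : ℕ) (hk : k < s.length) :
    desL (s.drop k) =
      (if k + 1 < s.length ∧ s.getD (k+1) 0 < s.getD k 0 then 1 else 0)
        + desL (s.drop (k+1)) := by
  rw [List.drop_eq_getElem_cons hk]
  by_cases h : k + 1 < s.length
  · rw [List.drop_eq_getElem_cons h, desL_cons, ← List.drop_eq_getElem_cons h,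
      List.getD_eq_getElem s 0 hk, List.getD_eq_getElem s 0 h]
    simp [h]
  · rw [List.drop_eq_nil_of_le (by omega)]
    simp [h]

lemma desL_drop_step (s : List ℕ) (j : ℕ) :
    desL (s.drop (j+1)) ≤ desL (s.drop j) ∧ desL (s.drop j) ≤ desL (s.drop (j+1)) + 1 := by
  by_cases hj : j < s.length
  · rw [desL_drop_succ s j hj]; split <;> omega
  · rw [List.drop_eq_nil_of_le (by omega), List.drop_eq_nil_of_le (by omega)]
    simp

lemma desL_drop_chain (s : List ℕ) (j j' : ℕ) (h : j ≤ j') :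
    desL (s.drop j') ≤ desL (s.drop j) ∧ desL (s.drop j) ≤ desL (s.drop j') + (j' - j) := by
  induction j', h using Nat.le_induction with
  | base => omega
  | succ j' hj ih =>
    have := desL_drop_step s j'
    omega

lemma desL_drop_le (s : List ℕ) (k : ℕ) (hk : k < s.length) :
    desL (s.drop k) + k + 1 ≤ s.length := by
  rw [List.drop_eq_getElem_cons hk]
  have h1 := desL_le (s[k]) (s.drop (k+1))
  rw [List.length_drop] at h1
  omega

lemma majG_le (s : List ℕ) (k : ℕ) (hk : k ≤ s.length) : majG s k ≤ s.length := by
  rw [majG]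
  by_cases h : k = s.length
  · simp [h]
  · have hk' : k < s.length := by omega
    have := desL_drop_le s k hk'
    rw [if_neg h]; split <;> omega

lemma majG_inj (s : List ℕ) (k1 k2 : ℕ) (hk1 : k1 ≤ s.length) (hk2 : k2 ≤ s.length)
    (heq : majG s k1 = majG s k2) : k1 = k2 := by
  suffices aux : ∀ a b, a < b → b ≤ s.length → majG s a ≠ majG s b by
    rcases lt_trichotomy k1 k2 with h | h | h
    · exact absurd heq (aux k1 k2 h hk2)
    · exact h
    · exact absurd heq.symm (aux k2 k1 h hk1)
  intro a b hab hb heq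
  rcases eq_or_lt_of_le hb with rfl | hblt
  · -- b = s.length : majG s b = 0 but majG s a ≥ 1
    rw [majG, majG, if_pos rfl, if_neg (by omega)] at heq
    split_ifs at heq <;> omega
  · have hga : 0 < b := by omega
    have halen : a < s.length := by omega
    have hb1 : b - 1 + 1 = b := by omega
    have hstep := desL_drop_succ s (b-1) (by omega)
    rw [hb1] at hstep
    have c1 := desL_drop_chain s a (b-1) (by omega)
    have c6 := desL_drop_chain s 0 (b-1) (Nat.zero_le _)
    have c5 := desL_drop_chain s 0 a (Nat.zero_le _)
    rw [majG, majG, if_neg (by omega : ¬a = s.length),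
      if_neg (by omega : ¬b = s.length)] at heq
    by_cases hDa : 0 < a ∧ s.getD a 0 < s.getD (a-1) 0 <;>
      by_cases hDb : 0 < b ∧ s.getD b 0 < s.getD (b-1) 0
    · -- both descents
      rw [if_pos hDa, if_pos hDb] at heq
      rw [if_pos ⟨hblt, hDb.2⟩] at hstep
      omega
    · -- a descent, b not
      rw [if_pos hDa, if_neg hDb] at heq
      have ha1 : a - 1 + 1 = a := by omega
      have hstepa := desL_drop_succ s (a-1) (by omega)
      rw [ha1, if_pos ⟨halen, hDa.2⟩] at hstepa
      have c7 := desL_drop_chain s 0 (a-1) (Nat.zero_le _)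
      rw [if_neg (fun hc => hDb ⟨hga, hc.2⟩)] at hstep
      omega
    · -- a not, b descent
      rw [if_neg hDa, if_pos hDb] at heq
      rw [if_pos ⟨hblt, hDb.2⟩] at hstep
      omega
    · -- neither
      rw [if_neg hDa, if_neg hDb] at heq
      rw [if_neg (fun hc => hDb ⟨hga, hc.2⟩)] at hstep
      omega

def toW (n : ℕ) (π : Equiv.Perm (Fin n)) : List ℕ := List.ofFn (fun i => (π i : ℕ))

@[simp] lemma toW_length (n : ℕ) (π : Equiv.Perm (Fin n)) : (toW n π).length = n := by
  simp [toW]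

lemma maj' (n : ℕ) (π : Equiv.Perm (Fin n)) :
    maj n π = ∑ i ∈ Finset.range n, if h : i + 1 < n then
      (if π ⟨i + 1, h⟩ < π ⟨i, Nat.lt_of_succ_lt h⟩ then i + 1 else 0) else 0 := rfl

lemma majL_eq_sum : ∀ (l : List ℕ) (i0 : ℕ),
    majL i0 l = ∑ i ∈ Finset.range l.length,
      if i + 1 < l.length then
        (if l.getD (i+1) 0 < l.getD i 0 then i0 + i + 1 else 0) else 0
  | [], i0 => by simp
  | [a], i0 => by simp
  | a :: b :: t, i0 => by
    rw [majL_cons, majL_eq_sum (b :: t) (i0 + 1)]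
    conv_rhs => rw [show (a :: b :: t).length = t.length + 1 + 1 from rfl,
      Finset.sum_range_succ']
    rw [Nat.add_comm]
    congr 1
    · apply Finset.sum_congr (by simp)
      intro i hi
      simp only [List.length_cons, List.getD_cons_succ]
      split_ifs <;> omega

lemma toW_getD (n : ℕ) (π : Equiv.Perm (Fin n)) (i : ℕ) (h : i < n) :
    (toW n π).getD i 0 = (π ⟨i, h⟩ : ℕ) := by
  rw [List.getD_eq_getElem _ _ (by simpa using h)]
  simp [toW]

lemma maj_eq_majL (n : ℕ) (π : Equiv.Perm (Fin n)) : maj n π = majL 0 (toW n π) := by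
  rw [maj', majL_eq_sum, toW_length]
  apply Finset.sum_congr rfl
  intro i hi
  by_cases h : i + 1 < n
  · rw [dif_pos h, if_pos h, toW_getD n π (i+1) h, toW_getD n π i (by omega)]
    rcases lt_or_ge (π ⟨i+1, h⟩) (π ⟨i, by omega⟩) with hlt | hle
    · rw [if_pos hlt, if_pos (by exact_mod_cast hlt)]
      omega
    · rw [if_neg (by omega), if_neg (by exact_mod_cast Nat.not_lt.mpr hle)]
  · rw [dif_neg h, if_neg h]

def WS (n : ℕ) : Finset (List ℕ) :=
  (Finset.univ : Finset (Equiv.Perm (Fin n))).image (toW n)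

lemma toW_injective (n : ℕ) : Function.Injective (toW n) := by
  intro a b h
  have h2 := List.ofFn_injective h
  apply Equiv.ext
  intro i
  exact Fin.val_injective (congrFun h2 i)

lemma perm_range_of_mem_WS {n : ℕ} {l : List ℕ} (hl : l ∈ WS n) :
    l.Perm (List.range n) := by
  obtain ⟨π, -, rfl⟩ := Finset.mem_image.mp hl
  apply List.perm_of_nodup_nodup_toFinset_eq
  · exact List.nodup_ofFn.mpr (fun i j hij => π.injective (Fin.val_injective hij))
  · exact List.nodup_range
  · ext x
    simp only [List.mem_toFinset, List.mem_range, toW, List.mem_ofFn, Set.mem_range]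
    constructor
    · rintro ⟨i, rfl⟩; exact (π i).isLt
    · intro hx; exact ⟨π.symm ⟨x, hx⟩, by simp⟩

lemma length_of_mem_WS {n : ℕ} {l : List ℕ} (hl : l ∈ WS n) : l.length = n := by
  simpa using (perm_range_of_mem_WS hl).length_eq

lemma lt_of_mem_WS {n : ℕ} {l : List ℕ} (hl : l ∈ WS n) : ∀ x ∈ l, x < n :=
  fun x hx => List.mem_range.mp ((perm_range_of_mem_WS hl).subset hx)

lemma mem_WS_of_perm_range {n : ℕ} {l : List ℕ} (h : l.Perm (List.range n)) :
    l ∈ WS n := by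
  have hlen : l.length = n := by simpa using h.length_eq
  have hnd : l.Nodup := h.nodup_iff.mpr List.nodup_range
  have hmem : ∀ x ∈ l, x < n := fun x hx => List.mem_range.mp (h.subset hx)
  have hf : ∀ i : Fin n, l[(i : ℕ)]'(by omega) < n := fun i => hmem _ (List.getElem_mem _)
  let g : Fin n → Fin n := fun i => ⟨l[(i : ℕ)]'(by omega), hf i⟩
  have hginj : Function.Injective g := by
    intro i j hij
    have h2 : l[(i : ℕ)]'(by omega) = l[(j : ℕ)]'(by omega) := congrArg Fin.val hij
    exact Fin.ext ((hnd.getElem_inj_iff).mp h2)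
  refine Finset.mem_image.mpr
    ⟨Equiv.ofBijective g (Finite.injective_iff_bijective.mp hginj), Finset.mem_univ _, ?_⟩
  apply List.ext_getElem (by simp [toW, hlen])
  intro i h1 h2
  simp [toW, Equiv.ofBijective, g]

def insW (n : ℕ) (q : List ℕ × ℕ) : List ℕ := q.1.take q.2 ++ (n : ℕ) :: q.1.drop q.2

lemma WS_succ (n : ℕ) :
    WS (n+1) = ((WS n) ×ˢ Finset.range (n+1)).image (insW n) := by
  ext l
  constructor
  · intro hl
    have h := perm_range_of_mem_WS hl
    have hlen : l.length = n + 1 := length_of_mem_WS hl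
    have hn : (n : ℕ) ∈ l := h.mem_iff.mpr (by simp)
    set k := List.idxOf n l with hk
    have hklt : k < l.length := List.idxOf_lt_length_iff.mpr hn
    have hlk : l[k] = n := List.getElem_idxOf hklt
    have hdec : l = l.take k ++ (n : ℕ) :: l.drop (k+1) := by
      conv_lhs => rw [← List.take_append_drop k l, List.drop_eq_getElem_cons hklt, hlk]
    have hperm2 : (l.take k ++ l.drop (k+1)).Perm (List.range n) := by
      have h1 : l.Perm ((n : ℕ) :: (l.take k ++ l.drop (k+1))) := by
        conv_lhs => rw [hdec]
        exact List.perm_middle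
      have h2 : l.Perm ((n : ℕ) :: List.range n) := h.trans (by
        rw [List.range_succ]; exact List.perm_append_singleton _ _)
      exact List.Perm.cons_inv (h1.symm.trans h2)
    refine Finset.mem_image.mpr ⟨(l.take k ++ l.drop (k+1), k), Finset.mem_product.mpr
      ⟨mem_WS_of_perm_range hperm2, Finset.mem_range.mpr (by omega)⟩, ?_⟩
    have htk : (l.take k).length = k := by rw [List.length_take]; omega
    simp only [insW]
    rw [List.take_left' htk, List.drop_left' htk]
    exact hdec.symm
  · intro hl
    obtain ⟨⟨s, k⟩, hq, rfl⟩ := Finset.mem_image.mp hl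
    obtain ⟨hs, hkr⟩ := Finset.mem_product.mp hq
    have hsp := perm_range_of_mem_WS hs
    apply mem_WS_of_perm_range
    have h3 : (insW n (s, k)).Perm ((n : ℕ) :: s) := by
      simp only [insW]
      exact List.perm_middle.trans (by rw [List.take_append_drop])
    exact h3.trans ((hsp.cons _).trans (by
      rw [List.range_succ]; exact (List.perm_append_singleton _ _).symm))

lemma insW_injOn (n : ℕ) :
    Set.InjOn (insW n) ((WS n) ×ˢ Finset.range (n+1)) := by
  have aux : ∀ s1 k1 s2 k2, (s1, k1) ∈ (WS n) ×ˢ Finset.range (n+1) →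
      (s2, k2) ∈ (WS n) ×ˢ Finset.range (n+1) →
      insW n (s1, k1) = insW n (s2, k2) → k1 < k2 → False := by
    intro s1 k1 s2 k2 h1 h2 heq hlt
    obtain ⟨hs1, hk1⟩ := Finset.mem_product.mp h1
    obtain ⟨hs2, hk2⟩ := Finset.mem_product.mp h2
    have hl1 : s1.length = n := length_of_mem_WS hs1
    have hl2 : s2.length = n := length_of_mem_WS hs2
    have hk1n : k1 ≤ n := by have := Finset.mem_range.mp hk1; omega
    have hk2n : k2 ≤ n := by have := Finset.mem_range.mp hk2; omega
    have htk1 : (s1.take k1).length = k1 := by rw [List.length_take]; omega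
    have htk2 : (s2.take k2).length = k2 := by rw [List.length_take]; omega
    have hL : (insW n (s1, k1)).getD k1 0 = n := by
      simp only [insW]
      have h5 := getD_append_self (s1.take k1) (s1.drop k1) (n : ℕ)
      rwa [htk1] at h5
    have hR : (insW n (s2, k2)).getD k1 0 < n := by
      simp only [insW]
      rw [List.getD_eq_getElem _ _ (by simp [List.length_append]; omega),
        List.getElem_append_left (by omega)]
      · exact lt_of_mem_WS hs2 _ (List.take_subset _ _ (List.getElem_mem _))
    rw [heq] at hL
    omega
  rintro ⟨s1, k1⟩ hq1 ⟨s2, k2⟩ hq2 heq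
  have hq1' : (s1, k1) ∈ (WS n) ×ˢ Finset.range (n+1) :=
    Finset.mem_product.mpr ⟨Finset.mem_coe.mp hq1.1, Finset.mem_coe.mp hq1.2⟩
  have hq2' : (s2, k2) ∈ (WS n) ×ˢ Finset.range (n+1) :=
    Finset.mem_product.mpr ⟨Finset.mem_coe.mp hq2.1, Finset.mem_coe.mp hq2.2⟩
  rcases lt_trichotomy k1 k2 with h | h | h
  · exact (aux s1 k1 s2 k2 hq1' hq2' heq h).elim
  · subst h
    obtain ⟨hs1, hk1⟩ := Finset.mem_product.mp hq1'
    obtain ⟨hs2, hk2⟩ := Finset.mem_product.mp hq2'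
    have hl1 : s1.length = n := length_of_mem_WS hs1
    have hl2 : s2.length = n := length_of_mem_WS hs2
    have htk1 : (s1.take k1).length = k1 := by
      rw [List.length_take]
      have := Finset.mem_range.mp hk1
      omega
    have htk2 : (s2.take k1).length = k1 := by
      rw [List.length_take]
      have := Finset.mem_range.mp hk1
      omega
    obtain ⟨ht, hd⟩ := List.append_inj heq (htk1.trans htk2.symm)
    injection hd with _ hd2
    have hss : s1 = s2 := by
      rw [← List.take_append_drop k1 s1, ← List.take_append_drop k1 s2, ht, hd2]
    rw [hss]
  · exact (aux s2 k2 s1 k1 hq2' hq1' heq.symm h).elim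

lemma majL_insW (n : ℕ) {s : List ℕ} (hs : s ∈ WS n) {k : ℕ} (hk : k ≤ n) :
    majL 0 (insW n (s, k)) = majL 0 s + majG s k := by
  have hlen : s.length = n := length_of_mem_WS hs
  have hmem := lt_of_mem_WS hs
  have h := majL_insert (s.take k) (s.drop k) n
    (fun x hx => hmem x (List.take_subset _ _ hx))
    (fun x hx => hmem x (List.drop_subset _ _ hx))
  rw [List.take_append_drop, List.length_take, min_eq_left (by omega)] at h
  exact h

lemma card_WS_filter (N : ℕ) (P : List ℕ → Prop) [DecidablePred P] :
    ((WS N).filter P).card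
      = (Finset.univ.filter (fun π : Equiv.Perm (Fin N) => P (toW N π))).card := by
  rw [WS, Finset.filter_image]
  exact Finset.card_image_of_injective _ (toW_injective N)

lemma key (n : ℕ) (p : ℕ → Prop) [DecidablePred p] :
    (Finset.univ.filter (fun π : Equiv.Perm (Fin (n+1)) => p (maj (n+1) π))).card
      = ∑ σ : Equiv.Perm (Fin n),
          ((Finset.range (n+1)).filter (fun j => p (maj n σ + j))).card := by
  have h1 : (Finset.univ.filter (fun π : Equiv.Perm (Fin (n+1)) => p (maj (n+1) π))).card
      = ((WS (n+1)).filter (fun l => p (majL 0 l))).card := by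
    rw [card_WS_filter]
    congr 1
    apply Finset.filter_congr
    intro π _
    rw [maj_eq_majL]
  rw [h1, WS_succ, Finset.filter_image,
    Finset.card_image_of_injOn ((insW_injOn n).mono (by
      intro q hq
      have h6 := Finset.mem_product.mp (Finset.filter_subset _ _ (Finset.mem_coe.mp hq))
      exact ⟨Finset.mem_coe.mpr h6.1, Finset.mem_coe.mpr h6.2⟩))]
  rw [Finset.card_filter, Finset.sum_product]
  have h2 : ∀ s ∈ WS n,
      (∑ k ∈ Finset.range (n+1), if p (majL 0 (insW n (s, k))) then 1 else 0)
        = ((Finset.range (n+1)).filter (fun j => p (majL 0 s + j))).card := by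
    intro s hs
    have hlen : s.length = n := length_of_mem_WS hs
    rw [Finset.sum_congr rfl (fun k hk => by
      rw [majL_insW n hs (by have := Finset.mem_range.mp hk; omega)]),
      ← Finset.card_filter]
    have hinj : Set.InjOn (majG s) (Finset.range (n+1)) := by
      intro a ha b hb hab
      exact majG_inj s a b
        (by have := Finset.mem_range.mp (Finset.mem_coe.mp ha); omega)
        (by have := Finset.mem_range.mp (Finset.mem_coe.mp hb); omega) hab
    have himg : (Finset.range (n+1)).image (majG s) = Finset.range (n+1) := by
      apply Finset.eq_of_subset_of_card_le
      · intro x hx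
        obtain ⟨k, hk, rfl⟩ := Finset.mem_image.mp hx
        have hk' := Finset.mem_range.mp hk
        have := majG_le s k (by omega)
        exact Finset.mem_range.mpr (by omega)
      · rw [Finset.card_image_of_injOn hinj]
    calc ((Finset.range (n+1)).filter (fun k => p (majL 0 s + majG s k))).card
        = (((Finset.range (n+1)).image (majG s)).filter
            (fun j => p (majL 0 s + j))).card := by
          rw [Finset.filter_image]
          rw [Finset.card_image_of_injOn (hinj.mono (by
            intro q hq
            exact Finset.mem_coe.mp (Finset.filter_subset _ _ (Finset.mem_coe.mp hq))))]
      _ = _ := by rw [himg]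
  rw [Finset.sum_congr rfl h2, WS, Finset.sum_image (fun a _ b _ h => toW_injective n h)]
  apply Finset.sum_congr rfl
  intro σ _
  rw [maj_eq_majL]

lemma shifted_mod_eq (m t c : ℕ) (hm : 0 < m) (ht : t < m) :
    (t + c) % m = if t + c % m < m then t + c % m else t + c % m - m := by
  have ha : c % m < m := Nat.mod_lt _ hm
  have h1 : (t + c) % m = (t + c % m) % m := by
    conv_lhs => rw [Nat.add_mod]
    rw [Nat.mod_eq_of_lt ht]
  rw [h1]
  split
  · exact Nat.mod_eq_of_lt ‹_›
  · rw [Nat.mod_eq_sub_mod (by omega), Nat.mod_eq_of_lt (by omega)]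

lemma unique_residue (m c r : ℕ) (hm : 0 < m) (hr : r < m) :
    ((Finset.range m).filter (fun t => (t + c) % m = r)).card = 1 := by
  have ha : c % m < m := Nat.mod_lt _ hm
  rw [Finset.card_eq_one]
  refine ⟨(m + r - c % m) % m, ?_⟩
  have ht0 : (m + r - c % m) % m = if c % m ≤ r then r - c % m else m + r - c % m := by
    rcases le_or_gt (c % m) r with hca | hca
    · rw [if_pos hca, show m + r - c % m = m + (r - c % m) by omega,
        Nat.add_mod_left, Nat.mod_eq_of_lt (by omega)]
    · rw [if_neg (by omega), Nat.mod_eq_of_lt (by omega)]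
  ext t
  simp only [Finset.mem_filter, Finset.mem_range, Finset.mem_singleton]
  constructor
  · rintro ⟨htm, he⟩
    rw [shifted_mod_eq m t c hm htm] at he
    rw [ht0]
    split at he <;> split <;> omega
  · rintro rfl
    have htm : (m + r - c % m) % m < m := Nat.mod_lt _ hm
    refine ⟨htm, ?_⟩
    rw [shifted_mod_eq m _ c hm htm, ht0]
    split_ifs <;> omega

theorem stmt_4 (m n : ℕ) (hm : 2 ≤ m) (hn : m ≤ n) (r : ℕ) (hr : r < m) :
    ((Finset.univ.filter (fun π : Equiv.Perm (Fin n) => maj n π % m = r)).card) * m =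
      Nat.factorial n := by
  induction n, hn using Nat.le_induction generalizing r with
  | base =>
    obtain ⟨n0, rfl⟩ : ∃ n0, m = n0 + 1 := ⟨m - 1, by omega⟩
    rw [key n0 (fun x => x % (n0+1) = r)]
    have hone : ∀ σ : Equiv.Perm (Fin n0),
        ((Finset.range (n0+1)).filter (fun j => (maj n0 σ + j) % (n0+1) = r)).card = 1 := by
      intro σ
      calc ((Finset.range (n0+1)).filter (fun j => (maj n0 σ + j) % (n0+1) = r)).card
          = ((Finset.range (n0+1)).filter (fun j => (j + maj n0 σ) % (n0+1) = r)).card := by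
            congr 1
            apply Finset.filter_congr
            intro j _
            rw [Nat.add_comm]
        _ = 1 := unique_residue (n0+1) (maj n0 σ) r (by omega) hr
    rw [Finset.sum_congr rfl (fun σ _ => hone σ), Finset.sum_const, smul_eq_mul, mul_one,
      Finset.card_univ, Fintype.card_perm, Fintype.card_fin, Nat.factorial_succ]
    ring
  | succ n hn ih =>
    rw [key n (fun x => x % m = r)]
    have hrepl : ∀ σ : Equiv.Perm (Fin n),
        ((Finset.range (n+1)).filter (fun j => (maj n σ + j) % m = r)).card
          = ((Finset.range (n+1)).filter (fun j => (maj n σ % m + j) % m = r)).card := by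
      intro σ
      congr 1
      apply Finset.filter_congr
      intro j _
      rw [Nat.mod_add_mod]
    rw [Finset.sum_congr rfl (fun σ _ => hrepl σ)]
    have hmaps : ∀ σ : Equiv.Perm (Fin n), σ ∈ (Finset.univ : Finset (Equiv.Perm (Fin n))) →
        maj n σ % m ∈ Finset.range m :=
      fun σ _ => Finset.mem_range.mpr (Nat.mod_lt _ (by omega))
    rw [← Finset.sum_fiberwise_of_maps_to hmaps]
    have hinner : ∀ t ∈ Finset.range m,
        (∑ σ ∈ Finset.univ.filter (fun σ : Equiv.Perm (Fin n) => maj n σ % m = t),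
          ((Finset.range (n+1)).filter (fun j => (maj n σ % m + j) % m = r)).card)
        = (Finset.univ.filter (fun σ : Equiv.Perm (Fin n) => maj n σ % m = t)).card *
            ((Finset.range (n+1)).filter (fun j => (t + j) % m = r)).card := by
      intro t ht
      rw [Finset.sum_congr rfl (fun σ hσ => by rw [(Finset.mem_filter.mp hσ).2]),
        Finset.sum_const, smul_eq_mul]
    rw [Finset.sum_congr rfl hinner, Finset.sum_mul]
    have hterm : ∀ t ∈ Finset.range m,
        (Finset.univ.filter fun σ : Equiv.Perm (Fin n) => maj n σ % m = t).card *
          ((Finset.range (n+1)).filter (fun j => (t + j) % m = r)).card * m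
        = n.factorial * ((Finset.range (n+1)).filter (fun j => (t + j) % m = r)).card := by
      intro t ht
      rw [mul_right_comm, ih t (Finset.mem_range.mp ht)]
    rw [Finset.sum_congr rfl hterm, ← Finset.mul_sum]
    have hc : (∑ t ∈ Finset.range m,
        ((Finset.range (n+1)).filter (fun j => (t + j) % m = r)).card) = n + 1 := by
      have h8 : ∀ t ∈ Finset.range m,
          ((Finset.range (n+1)).filter (fun j => (t + j) % m = r)).card
            = ∑ j ∈ Finset.range (n+1), if (t + j) % m = r then 1 else 0 :=
        fun t _ => Finset.card_filter _ _
      rw [Finset.sum_congr rfl h8, Finset.sum_comm]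
      have h9 : ∀ j ∈ Finset.range (n+1),
          (∑ t ∈ Finset.range m, if (t + j) % m = r then 1 else 0) = 1 := by
        intro j _
        rw [← Finset.card_filter]
        exact unique_residue m j r (by omega) hr
      rw [Finset.sum_congr rfl h9, Finset.sum_const, smul_eq_mul, Finset.card_range, mul_one]
    rw [hc, Nat.factorial_succ]
    ring
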